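/- (k-expert activation, sufficiency) Let u ∈ ℝ^E with E ≥ 2, let 1 ≤ k ≤ E − 1, and let λ < 1 satisfy 1 − (U_k − k·u_(k+1)) ≤ λ < 1 − (U_k − k·u_(k)). Then the Sparsegen routing output p* = sparsegen(u, λ) satisfies p*_{σ(i)} > 0 for all i ≤ k and p*_{σ(i)} = 0 for all i > k; that is, exactly the k experts with the largest scores are activated. -/

import Mathlib

noncomputable section

/-- The probability simplex in `ℝ^E`. -/
def simplex (E : ℕ) : Set (EuclideanSpace ℝ (Fin E)) :=
  {p | (∀ i, 0 ≤ p i) ∧ ∑ i, p i = 1}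

/-- The Sparsegen objective `g_{u,λ}(p) = ‖p − u‖₂² − λ‖p‖₂²`. -/
def sparsegenObj {E : ℕ} (u : EuclideanSpace ℝ (Fin E)) (lam : ℝ)
    (p : EuclideanSpace ℝ (Fin E)) : ℝ :=
  ‖p - u‖ ^ 2 - lam * ‖p‖ ^ 2

lemma sparsegenObj_eq_sum {E : ℕ} (u : EuclideanSpace ℝ (Fin E)) (lam : ℝ)
    (p : EuclideanSpace ℝ (Fin E)) :
    sparsegenObj u lam p = ∑ i, ((p i - u i)^2 - lam * (p i)^2) := by
  unfold sparsegenObj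
  rw [EuclideanSpace.norm_eq, EuclideanSpace.norm_eq,
    Real.sq_sqrt (by positivity), Real.sq_sqrt (by positivity),
    Finset.mul_sum, ← Finset.sum_sub_distrib]
  simp [Real.norm_eq_abs, sq_abs]

/-- k-expert activation, sufficiency: let `u ∈ ℝ^E` with `E ≥ 2`, `1 ≤ k ≤ E − 1`,
and let `λ < 1` satisfy `1 − (U_k − k·u_(k+1)) ≤ λ < 1 − (U_k − k·u_(k))`.  Then the
Sparsegen routing output `p*` (the unique minimizer over the simplex) satisfies
`p*_{σ(i)} > 0` for `i ≤ k` and `p*_{σ(i)} = 0` for `i > k` (1-based): exactly the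
`k` experts with largest scores are activated.  (Indices are translated to 0-based
`Fin E`: paper's `u_(k)` is `u (σ ⟨k-1,_⟩)` and `U_k = Σ_{i ≤ k-1} u (σ i)`.) -/
theorem k_expert_activation_sufficiency (E : ℕ) (hE : 2 ≤ E)
    (u : EuclideanSpace ℝ (Fin E)) (σ : Equiv.Perm (Fin E))
    (hσ : Antitone fun i => u (σ i))
    (k : ℕ) (hk1 : 1 ≤ k) (hk2 : k ≤ E - 1) (lam : ℝ) (hlam : lam < 1)
    (hlow : 1 - ((∑ i ∈ Finset.Iic (⟨k - 1, by omega⟩ : Fin E), u (σ i))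
        - k * u (σ ⟨k, by omega⟩)) ≤ lam)
    (hhigh : lam < 1 - ((∑ i ∈ Finset.Iic (⟨k - 1, by omega⟩ : Fin E), u (σ i))
        - k * u (σ ⟨k - 1, by omega⟩)))
    (p : EuclideanSpace ℝ (Fin E)) (hp : p ∈ simplex E)
    (hmin : IsMinOn (sparsegenObj u lam) (simplex E) p) :
    (∀ i : Fin E, (i : ℕ) < k → 0 < p (σ i)) ∧
    (∀ i : Fin E, k ≤ (i : ℕ) → p (σ i) = 0) := by
  have hc : (0:ℝ) < 1 - lam := by linarith
  set c : ℝ := 1 - lam with hcdef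
  have hkE : k < E := by omega
  have hkR : (0:ℝ) < (k:ℝ) := by exact_mod_cast hk1
  set Z : Fin E → ℝ := fun j => u j / c with hZ
  have huZ : ∀ j, u j = c * Z j := by
    intro j; simp only [hZ]; field_simp
  have hZanti : Antitone fun i => Z (σ i) := by
    intro a b hab
    simp only [hZ]
    exact div_le_div_of_nonneg_right (hσ hab) hc.le
  set U : ℝ := ∑ i ∈ Finset.Iic (⟨k - 1, by omega⟩ : Fin E), u (σ i) with hU
  set τ : ℝ := (U - c) / (c * k) with hτ
  -- bounds on τ
  have hτ_lt : ∀ i : Fin E, (i : ℕ) < k → τ < Z (σ i) := by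
    intro i hi
    have h1 : U - c < k * u (σ ⟨k - 1, by omega⟩) := by linarith [hhigh]
    have h2 : τ < Z (σ ⟨k - 1, by omega⟩) := by
      rw [hτ, hZ]
      rw [div_lt_div_iff₀ (by positivity) hc]
      nlinarith
    have h3 : Z (σ ⟨k - 1, by omega⟩) ≤ Z (σ i) := by
      apply hZanti
      rw [Fin.le_def]
      simp only [Fin.val_mk]
      omega
    linarith
  have hτ_ge : ∀ i : Fin E, k ≤ (i : ℕ) → Z (σ i) ≤ τ := by
    intro i hi
    have h1 : c ≤ U - k * u (σ ⟨k, by omega⟩) := by linarith [hlow]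
    have h2 : Z (σ ⟨k, by omega⟩) ≤ τ := by
      rw [hτ, hZ]
      rw [div_le_div_iff₀ hc (by positivity)]
      nlinarith
    have h3 : Z (σ i) ≤ Z (σ ⟨k, by omega⟩) := by
      apply hZanti
      rw [Fin.le_def]
      simp only [Fin.val_mk]
      omega
    linarith
  -- the candidate minimizer
  set q : EuclideanSpace ℝ (Fin E) :=
    WithLp.toLp 2 (fun j => if ((σ.symm j : Fin E) : ℕ) < k then Z j - τ else 0) with hq
  have hqσ : ∀ i : Fin E, q (σ i) = if (i : ℕ) < k then Z (σ i) - τ else 0 := by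
    intro i; simp [hq]
  -- the Iic index set
  have hIic : Finset.Iic (⟨k - 1, by omega⟩ : Fin E)
      = Finset.univ.filter (fun i : Fin E => (i : ℕ) < k) := by
    ext i
    simp only [Finset.mem_Iic, Finset.mem_filter, Finset.mem_univ, true_and,
      Fin.le_def, Fin.val_mk]
    omega
  have hcard : (Finset.univ.filter (fun i : Fin E => (i : ℕ) < k)).card = k := by
    rw [← hIic, Fin.card_Iic]
    simp only [Fin.val_mk]
    omega
  -- sum of q over σ equals 1
  have hsum_qσ : ∑ i : Fin E, q (σ i) = 1 := by
    have h1 : ∑ i : Fin E, q (σ i)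
        = (∑ i : Fin E, if (i:ℕ) < k then Z (σ i) else 0)
          - (∑ i : Fin E, if (i:ℕ) < k then τ else 0) := by
      rw [← Finset.sum_sub_distrib]
      apply Finset.sum_congr rfl
      intro i _
      rw [hqσ]
      split <;> ring
    have h2 : (∑ i : Fin E, if (i:ℕ) < k then Z (σ i) else 0) = U / c := by
      rw [← Finset.sum_filter, ← hIic, hU, ← Finset.sum_div]
    have h3 : (∑ i : Fin E, if (i:ℕ) < k then τ else 0) = k * τ := by
      rw [← Finset.sum_filter, Finset.sum_const, hcard, nsmul_eq_mul]
    rw [h1, h2, h3, hτ]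
    field_simp
    ring
  have hsum_q : ∑ j, q j = 1 := by
    rw [← Equiv.sum_comp σ q]; exact hsum_qσ
  have hq_nonneg : ∀ j, 0 ≤ q j := by
    intro j
    rw [hq]
    dsimp only
    split
    · rename_i h
      have := hτ_lt (σ.symm j) h
      simp only [Equiv.apply_symm_apply] at this
      linarith
    · exact le_rfl
  have hq_mem : q ∈ simplex E := ⟨hq_nonneg, hsum_q⟩
  have hsum_pσ : ∑ i : Fin E, p (σ i) = 1 := by
    rw [Equiv.sum_comp σ p]; exact hp.2
  -- variational inequality
  have hkey : 0 ≤ ∑ j, (p j - q j) * (q j - Z j) := by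
    rw [← Equiv.sum_comp σ (fun j => (p j - q j) * (q j - Z j))]
    have e1 : ∑ i : Fin E, (p (σ i) - q (σ i)) * (q (σ i) - Z (σ i))
        = (∑ i : Fin E, (if (i:ℕ) < k then 0 else p (σ i) * (τ - Z (σ i))))
          - τ * (∑ i : Fin E, p (σ i)) + τ * (∑ i : Fin E, q (σ i)) := by
      rw [Finset.mul_sum, Finset.mul_sum, ← Finset.sum_sub_distrib,
        ← Finset.sum_add_distrib]
      apply Finset.sum_congr rfl
      intro i _
      rw [hqσ]
      split <;> ring
    rw [e1, hsum_pσ, hsum_qσ]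
    have h0 : 0 ≤ ∑ i : Fin E, (if (i:ℕ) < k then 0 else p (σ i) * (τ - Z (σ i))) := by
      apply Finset.sum_nonneg
      intro i _
      split
      · exact le_rfl
      · rename_i h
        push_neg at h
        exact mul_nonneg (hp.1 _) (by linarith [hτ_ge i h])
    linarith
  -- objective gap identity
  have hgap : sparsegenObj u lam p - sparsegenObj u lam q
      = c * (∑ j, (p j - q j)^2) + 2 * c * (∑ j, (p j - q j) * (q j - Z j)) := by
    rw [sparsegenObj_eq_sum, sparsegenObj_eq_sum, Finset.mul_sum, Finset.mul_sum,
      ← Finset.sum_sub_distrib, ← Finset.sum_add_distrib]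
    apply Finset.sum_congr rfl
    intro j _
    rw [huZ j, hcdef]
    ring
  have hle : sparsegenObj u lam p ≤ sparsegenObj u lam q := hmin hq_mem
  have hsq : ∑ j, (p j - q j)^2 ≤ 0 := by nlinarith
  have hpq : ∀ j, p j = q j := by
    have hz : ∑ j, (p j - q j)^2 = 0 :=
      le_antisymm hsq (Finset.sum_nonneg fun j _ => sq_nonneg _)
    intro j
    have := (Finset.sum_eq_zero_iff_of_nonneg
      (fun j _ => sq_nonneg (p j - q j))).mp hz j (Finset.mem_univ j)
    have : p j - q j = 0 := by
      exact pow_eq_zero_iff (by norm_num) |>.mp this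
    linarith
  constructor
  · intro i hi
    rw [hpq (σ i), hqσ i, if_pos hi]
    linarith [hτ_lt i hi]
  · intro i hi
    rw [hpq (σ i), hqσ i, if_neg (by omega)]
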